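/- For all sufficiently large natural numbers x, the product of all prime numbers p satisfying x/e < p ≤ x is at least (x/e)^(x/(3·ln x)); that is, there exists x₀ such that for all natural numbers x ≥ x₀, ∏_{p prime, x/e < p ≤ x} p ≥ (x/e)^(x/(3·ln x)) as real numbers. -/

import Mathlib

set_option maxHeartbeats 1000000

open Finset Nat Real

lemma cheb_pt (m : ℕ) : m + m/30 ≤ m/2 + m/3 + m/5 + 1 := by omega

lemma legendre {p : ℕ} (hp : p.Prime) {n b : ℕ} (hb : Nat.log p n < b) :
    (Nat.factorial n).factorization p = ∑ i ∈ Finset.Ico 1 b, n / p ^ i := by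
  rw [← Nat.multiplicity_eq_factorization hp n.factorial_ne_zero,
    multiplicity_eq_of_emultiplicity_eq_some (hp.emultiplicity_factorial hb)]

/-- product of p ^ log p n over primes up to n -/
def MM (n : ℕ) : ℕ := ∏ p ∈ (range (n+1)).filter Nat.Prime, p ^ (Nat.log p n)

lemma MM_ne_zero (n : ℕ) : MM n ≠ 0 := by
  unfold MM
  refine Finset.prod_ne_zero_iff.2 fun p hp => ?_
  exact pow_ne_zero _ ((Finset.mem_filter.1 hp).2.pos.ne')

lemma key_dvd (n : ℕ) :
    n ! * (n/30)! ∣ ((n/2)! * (n/3)! * (n/5)!) * MM n := by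
  rw [← Nat.factorization_le_iff_dvd (by positivity) (by
    have := MM_ne_zero n; positivity)]
  intro q
  rcases em q.Prime with hq | hq
  · set b := Nat.log q n + 1 with hbdef
    have hble : ∀ d : ℕ, 0 < d → Nat.log q (n / d) < b := fun d hd =>
      lt_of_le_of_lt (Nat.log_mono_right (Nat.div_le_self n d)) (Nat.lt_succ_self _)
    have h1 : (n ! * (n/30)!).factorization q
        = (∑ i ∈ Finset.Ico 1 b, n / q ^ i) + ∑ i ∈ Finset.Ico 1 b, (n/30) / q ^ i := by
      rw [Nat.factorization_mul n.factorial_ne_zero (n/30).factorial_ne_zero]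
      simp only [Finsupp.add_apply]
      rw [legendre (n := n) (b := b) hq (Nat.lt_succ_self _),
        legendre (n := n/30) (b := b) hq (hble 30 (by norm_num))]
    have h2 : (((n/2)! * (n/3)! * (n/5)!) * MM n).factorization q
        = ((∑ i ∈ Finset.Ico 1 b, (n/2) / q ^ i) + ∑ i ∈ Finset.Ico 1 b, (n/3) / q ^ i)
          + (∑ i ∈ Finset.Ico 1 b, (n/5) / q ^ i) + (MM n).factorization q := by
      rw [Nat.factorization_mul (by positivity) (MM_ne_zero n),
        Nat.factorization_mul (by positivity) (n/5).factorial_ne_zero,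
        Nat.factorization_mul (n/2).factorial_ne_zero (n/3).factorial_ne_zero]
      simp only [Finsupp.add_apply]
      rw [legendre (n := n/2) (b := b) hq (hble 2 (by norm_num)),
        legendre (n := n/3) (b := b) hq (hble 3 (by norm_num)),
        legendre (n := n/5) (b := b) hq (hble 5 (by norm_num))]
    rw [h1, h2]
    rcases le_or_gt q n with hqn | hqn
    · -- q ≤ n : M contributes log q n = b - 1
      have hM : Nat.log q n ≤ (MM n).factorization q := by
        rw [← hq.pow_dvd_iff_le_factorization (MM_ne_zero n)]
        exact Finset.dvd_prod_of_mem _ (Finset.mem_filter.2 ⟨Finset.mem_range.2 (by omega), hq⟩)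
      have hsum : (∑ i ∈ Finset.Ico 1 b, n / q ^ i) + ∑ i ∈ Finset.Ico 1 b, (n/30) / q ^ i
          ≤ ((∑ i ∈ Finset.Ico 1 b, (n/2) / q ^ i) + ∑ i ∈ Finset.Ico 1 b, (n/3) / q ^ i)
            + (∑ i ∈ Finset.Ico 1 b, (n/5) / q ^ i) + Nat.log q n := by
        have : ∀ i, n / q ^ i + (n/30) / q ^ i ≤ (n/2)/q^i + (n/3)/q^i + (n/5)/q^i + 1 := by
          intro i
          have h30 : n / 30 / q ^ i = n / q ^ i / 30 := by
            rw [Nat.div_div_eq_div_mul, Nat.div_div_eq_div_mul, Nat.mul_comm]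
          have h2' : n / 2 / q ^ i = n / q ^ i / 2 := by
            rw [Nat.div_div_eq_div_mul, Nat.div_div_eq_div_mul, Nat.mul_comm]
          have h3' : n / 3 / q ^ i = n / q ^ i / 3 := by
            rw [Nat.div_div_eq_div_mul, Nat.div_div_eq_div_mul, Nat.mul_comm]
          have h5' : n / 5 / q ^ i = n / q ^ i / 5 := by
            rw [Nat.div_div_eq_div_mul, Nat.div_div_eq_div_mul, Nat.mul_comm]
          rw [h30, h2', h3', h5']
          exact cheb_pt _
        calc (∑ i ∈ Finset.Ico 1 b, n / q ^ i) + ∑ i ∈ Finset.Ico 1 b, (n/30) / q ^ i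
            = ∑ i ∈ Finset.Ico 1 b, (n / q ^ i + (n/30)/q^i) := by rw [Finset.sum_add_distrib]
          _ ≤ ∑ i ∈ Finset.Ico 1 b, ((n/2)/q^i + (n/3)/q^i + (n/5)/q^i + 1) :=
              Finset.sum_le_sum fun i _ => this i
          _ = ((∑ i ∈ Finset.Ico 1 b, (n/2) / q ^ i) + ∑ i ∈ Finset.Ico 1 b, (n/3) / q ^ i)
            + (∑ i ∈ Finset.Ico 1 b, (n/5) / q ^ i) + Nat.log q n := by
              simp [Finset.sum_add_distrib, Finset.Ico_add_one_right_eq_Icc, hbdef]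
      exact hsum.trans (Nat.add_le_add_left hM _)
    · -- q > n : all sums about n are 0
      have hz : ∀ i ∈ Finset.Ico 1 b, n / q ^ i = 0 := by
        intro i hi
        have hi1 : 1 ≤ i := (Finset.mem_Ico.1 hi).1
        have : n < q ^ i := by
          calc n < q := hqn
            _ ≤ q ^ i := Nat.le_self_pow (by omega) q
        exact Nat.div_eq_of_lt this
      have hz30 : ∀ i ∈ Finset.Ico 1 b, n / 30 / q ^ i = 0 := fun i hi =>
        Nat.eq_zero_of_le_zero ((Nat.div_le_div_right (Nat.div_le_self n 30)).trans (hz i hi).le)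
      rw [Finset.sum_congr rfl hz, Finset.sum_congr rfl hz30]
      simp
  · simp [Nat.factorization_eq_zero_of_not_prime _ hq]


lemma MM_le (n : ℕ) (hn : n ≠ 0) : MM n ≤ primorial n * n ^ (Nat.sqrt n) := by
  classical
  have hsplit : MM n = primorial n *
      ∏ p ∈ (range (n+1)).filter Nat.Prime, p ^ (Nat.log p n - 1) := by
    rw [primorial, ← Finset.prod_mul_distrib]
    refine Finset.prod_congr rfl fun p hp => ?_
    obtain ⟨hpr, hpp⟩ := Finset.mem_filter.1 hp
    have hlog : 1 ≤ Nat.log p n :=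
      Nat.log_pos hpp.one_lt (by simpa using Nat.lt_succ_iff.1 (Finset.mem_range.1 hpr))
    rw [← pow_succ']
    congr 1
    omega
  rw [hsplit]
  refine Nat.mul_le_mul_left _ ?_
  set S := (range (n+1)).filter Nat.Prime with hS
  set S' := S.filter (fun p => p ≤ Nat.sqrt n) with hS'
  have hprod : ∏ p ∈ S, p ^ (Nat.log p n - 1) = ∏ p ∈ S', p ^ (Nat.log p n - 1) := by
    refine (Finset.prod_subset (Finset.filter_subset _ _) ?_).symm
    intro p hp hnp
    have hps : Nat.sqrt n < p := by
      by_contra h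
      exact hnp (Finset.mem_filter.2 ⟨hp, by omega⟩)
    have h1 : n < p ^ 2 := Nat.sqrt_lt'.1 hps
    have h2 : Nat.log p n < 2 := Nat.log_lt_of_lt_pow hn h1
    interval_cases h : Nat.log p n <;> simp
  rw [hprod]
  calc ∏ p ∈ S', p ^ (Nat.log p n - 1) ≤ ∏ _p ∈ S', n := by
        refine Finset.prod_le_prod' fun p hp => ?_
        obtain ⟨hpS, _⟩ := Finset.mem_filter.1 hp
        obtain ⟨_, hpp⟩ := Finset.mem_filter.1 hpS
        calc p ^ (Nat.log p n - 1) ≤ p ^ (Nat.log p n) :=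
              Nat.pow_le_pow_right hpp.pos (by omega)
          _ ≤ n := Nat.pow_log_le_self p hn
    _ = n ^ S'.card := (Finset.prod_const n)
    _ ≤ n ^ Nat.sqrt n := by
        refine Nat.pow_le_pow_right (Nat.pos_of_ne_zero hn) ?_
        calc S'.card ≤ (Finset.Ico 2 (Nat.sqrt n + 1)).card := by
              refine Finset.card_le_card ?_
              intro p hp
              obtain ⟨hpS, hple⟩ := Finset.mem_filter.1 hp
              obtain ⟨_, hpp⟩ := Finset.mem_filter.1 hpS
              exact Finset.mem_Ico.2 ⟨hpp.two_le, by omega⟩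
          _ ≤ Nat.sqrt n := by simp [Nat.card_Ico]

lemma pow_le_factorial_mul_exp (m : ℕ) : (m : ℝ) ^ m ≤ (m ! : ℝ) * Real.exp m := by
  induction m with
  | zero => simp
  | succ m ih =>
    have hstep : ((m:ℝ) + 1) ^ m ≤ (m:ℝ) ^ m * Real.exp 1 := by
      rcases Nat.eq_zero_or_pos m with h | h
      · subst h
        simpa using (by nlinarith [Real.exp_one_gt_d9] : (1:ℝ) ≤ Real.exp 1)
      · have hm : (0:ℝ) < m := by exact_mod_cast h
        have h1 : (m:ℝ) + 1 ≤ (m:ℝ) * Real.exp (1 / m) := by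
          have := Real.add_one_le_exp (1 / (m:ℝ))
          calc (m:ℝ) + 1 = (m:ℝ) * (1/(m:ℝ) + 1) := by field_simp; ring
            _ ≤ (m:ℝ) * Real.exp (1/m) := by nlinarith [this]
        calc ((m:ℝ)+1)^m ≤ ((m:ℝ) * Real.exp (1/m))^m := by
              exact pow_le_pow_left₀ (by positivity) h1 m
          _ = (m:ℝ)^m * Real.exp (1/m) ^ m := by rw [mul_pow]
          _ = (m:ℝ)^m * Real.exp 1 := by
              rw [← Real.exp_nat_mul]
              congr 1
              field_simp
    calc ((m+1 : ℕ) : ℝ) ^ (m+1) = ((m:ℝ)+1) * ((m:ℝ)+1)^m := by push_cast; ring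
      _ ≤ ((m:ℝ)+1) * ((m:ℝ)^m * Real.exp 1) := by
          refine mul_le_mul_of_nonneg_left hstep (by positivity)
      _ ≤ ((m:ℝ)+1) * (((m ! : ℝ)) * Real.exp m * Real.exp 1) := by
          refine mul_le_mul_of_nonneg_left (mul_le_mul_of_nonneg_right ih (Real.exp_pos 1).le)
            (by positivity)
      _ = (((m+1)! : ℕ) : ℝ) * Real.exp ((m+1 : ℕ) : ℝ) := by
          rw [Nat.factorial_succ]
          push_cast
          rw [Real.exp_add]
          ring

lemma factorial_mul_exp_le (m : ℕ) (hm : 1 ≤ m) :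
    (m ! : ℝ) * Real.exp m ≤ Real.exp 1 * m * (m:ℝ) ^ m := by
  induction m with
  | zero => omega
  | succ m ih =>
    rcases Nat.eq_zero_or_pos m with h | h
    · subst h
      simp [Nat.factorial]
    · have hm' : (0:ℝ) < m := by exact_mod_cast h
      have key : Real.exp 1 * (m:ℝ) ^ (m+1) ≤ ((m:ℝ)+1) ^ (m+1) := by
        -- e ≤ (1+1/m)^(m+1)
        have hlog : 1 / ((m:ℝ)+1) ≤ Real.log (((m:ℝ)+1)/m) := by
          have h2 : Real.log ((m:ℝ)/((m:ℝ)+1)) ≤ (m:ℝ)/((m:ℝ)+1) - 1 :=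
            Real.log_le_sub_one_of_pos (by positivity)
          have h3 : Real.log ((m:ℝ)/((m:ℝ)+1)) = - Real.log (((m:ℝ)+1)/m) := by
            rw [← Real.log_inv]
            congr 1
            field_simp
          rw [h3] at h2
          have : (m:ℝ)/((m:ℝ)+1) - 1 = - (1/((m:ℝ)+1)) := by field_simp; ring
          linarith [h2.trans_eq this]
        have hexp : Real.exp 1 ≤ (((m:ℝ)+1)/m) ^ (m+1) := by
          have h4 : (1:ℝ) ≤ ((m:ℕ)+1 : ℝ) * Real.log (((m:ℝ)+1)/m) := by
            have := mul_le_mul_of_nonneg_left hlog (by positivity : (0:ℝ) ≤ (m:ℝ)+1)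
            calc (1:ℝ) = ((m:ℝ)+1) * (1/((m:ℝ)+1)) := by field_simp
              _ ≤ ((m:ℝ)+1) * Real.log (((m:ℝ)+1)/m) := this
            
          calc Real.exp 1 ≤ Real.exp (((m:ℝ)+1) * Real.log (((m:ℝ)+1)/m)) :=
                Real.exp_le_exp.2 (by exact_mod_cast h4)
            _ = (((m:ℝ)+1)/m) ^ (m+1) := by
                have hc : ((m:ℝ)+1) = ((m+1 : ℕ) : ℝ) := by push_cast; ring
                rw [hc, Real.exp_nat_mul, Real.exp_log (by positivity)]
        calc Real.exp 1 * (m:ℝ)^(m+1) ≤ ((((m:ℝ)+1)/m)^(m+1)) * (m:ℝ)^(m+1) :=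
              mul_le_mul_of_nonneg_right hexp (by positivity)
          _ = ((m:ℝ)+1)^(m+1) := by
              rw [div_pow, div_mul_eq_mul_div, mul_div_assoc]
              field_simp
      calc ((m+1)! : ℝ) * Real.exp (m+1 : ℕ) = ((m:ℝ)+1) * Real.exp 1 * ((m ! : ℝ) * Real.exp m) := by
            rw [Nat.factorial_succ]
            push_cast
            rw [Real.exp_add]
            ring
        _ ≤ ((m:ℝ)+1) * Real.exp 1 * (Real.exp 1 * m * (m:ℝ)^m) := by
            refine mul_le_mul_of_nonneg_left (ih h) (by positivity)
        _ = ((m:ℝ)+1) * Real.exp 1 * (Real.exp 1 * (m:ℝ)^(m+1)) := by ring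
        _ ≤ ((m:ℝ)+1) * Real.exp 1 * (((m:ℝ)+1)^(m+1)) := by
            refine mul_le_mul_of_nonneg_left key (by positivity)
        _ = Real.exp 1 * ((m+1 : ℕ):ℝ) * ((m+1:ℕ):ℝ)^(m+1) := by
            push_cast
            ring

lemma log_factorial_ge (m : ℕ) : (m:ℝ) * Real.log m - m ≤ Real.log (m !) := by
  have h1 : (0:ℝ) < (m:ℝ) ^ m := by
    rcases Nat.eq_zero_or_pos m with h | h
    · simp [h]
    · positivity
  have := Real.log_le_log h1 (pow_le_factorial_mul_exp m)
  rw [Real.log_pow, Real.log_mul (by exact_mod_cast m.factorial_pos.ne') (Real.exp_ne_zero _),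
    Real.log_exp] at this
  push_cast at this ⊢
  linarith

lemma log_factorial_le (m : ℕ) (hm : 1 ≤ m) :
    Real.log (m !) ≤ (m:ℝ) * Real.log m - m + Real.log m + 1 := by
  have hm' : (0:ℝ) < m := by exact_mod_cast hm
  have h1 : (0:ℝ) < (m ! : ℝ) * Real.exp m := by
    have := m.factorial_pos
    positivity
  have := Real.log_le_log h1 (factorial_mul_exp_le m hm)
  rw [Real.log_mul (by exact_mod_cast m.factorial_pos.ne') (Real.exp_ne_zero _),
    Real.log_exp, Real.log_mul (by positivity) (by positivity),
    Real.log_mul (Real.exp_ne_zero 1) (by positivity), Real.log_exp, Real.log_pow] at this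
  push_cast at this ⊢
  linarith

/-- floor-division comparison facts -/
lemma floor_div_facts (n d : ℕ) (hd : 0 < d) (hnd : d ≤ n) :
    (1:ℝ) ≤ ((n/d : ℕ) : ℝ) ∧ ((n/d : ℕ) : ℝ) ≤ (n:ℝ)/d ∧ (n:ℝ)/d ≤ ((n/d : ℕ) : ℝ) + 1 := by
  refine ⟨by exact_mod_cast (Nat.one_le_div_iff hd).2 hnd, Nat.cast_div_le, ?_⟩
  have h : n < d * (n/d) + d := by
    have := Nat.div_add_mod n d
    have := Nat.mod_lt n hd
    omega
  have h' : (n:ℝ) < d * ((n/d : ℕ) : ℝ) + d := by exact_mod_cast h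
  rw [div_le_iff₀ (by positivity : (0:ℝ) < (d:ℝ))]
  nlinarith

lemma theta_lower (n : ℕ) (hn : 30 ≤ n) :
    ((14 * Real.log 2 + 9 * Real.log 3 + 5 * Real.log 5)/30) * n
      - (Real.sqrt n + 4) * Real.log n - 7 ≤ Real.log (primorial n) := by
  have hn0 : n ≠ 0 := by omega
  have hn0' : (0:ℝ) < n := by exact_mod_cast Nat.pos_of_ne_zero hn0
  -- nat inequality
  have hnat : n ! * (n/30)! ≤ ((n/2)! * (n/3)! * (n/5)!) * (primorial n * n ^ Nat.sqrt n) := by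
    calc n ! * (n/30)! ≤ ((n/2)! * (n/3)! * (n/5)!) * MM n :=
          Nat.le_of_dvd (by have := MM_ne_zero n; positivity) (key_dvd n)
      _ ≤ ((n/2)! * (n/3)! * (n/5)!) * (primorial n * n ^ Nat.sqrt n) :=
          Nat.mul_le_mul_left _ (MM_le n hn0)
  -- cast and take logs
  have hreal : (n ! : ℝ) * ((n/30)! : ℝ) ≤
      (((n/2)! : ℝ) * ((n/3)! : ℝ) * ((n/5)! : ℝ)) * ((primorial n : ℝ) * (n:ℝ) ^ Nat.sqrt n) := by
    exact_mod_cast hnat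
  have hlog : Real.log (n !) + Real.log ((n/30)!) ≤
      Real.log ((n/2)!) + Real.log ((n/3)!) + Real.log ((n/5)!)
        + Real.log (primorial n) + (Nat.sqrt n : ℝ) * Real.log n := by
    have hpos : (0:ℝ) < (n ! : ℝ) * ((n/30)! : ℝ) := by
      have := n.factorial_pos; have := (n/30).factorial_pos; positivity
    have := Real.log_le_log hpos hreal
    rw [Real.log_mul (by exact_mod_cast n.factorial_pos.ne') (by exact_mod_cast (n/30).factorial_pos.ne'),
      Real.log_mul (by positivity) (by
        have := primorial_pos n
        positivity),
      Real.log_mul (by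
        have := (n/2).factorial_pos; have := (n/3).factorial_pos
        positivity) (by exact_mod_cast (n/5).factorial_pos.ne'),
      Real.log_mul (by exact_mod_cast (n/2).factorial_pos.ne') (by exact_mod_cast (n/3).factorial_pos.ne'),
      Real.log_mul (by exact_mod_cast (primorial_pos n).ne') (by positivity),
      Real.log_pow] at this
    linarith
  -- individual bounds
  obtain ⟨h2a, h2b, h2c⟩ := floor_div_facts n 2 (by norm_num) (by omega)
  obtain ⟨h3a, h3b, h3c⟩ := floor_div_facts n 3 (by norm_num) (by omega)
  obtain ⟨h5a, h5b, h5c⟩ := floor_div_facts n 5 (by norm_num) (by omega)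
  obtain ⟨h30a, h30b, h30c⟩ := floor_div_facts n 30 (by norm_num) (by omega)
  have hlogn0 : 0 ≤ Real.log n := Real.log_nonneg (by exact_mod_cast Nat.one_le_iff_ne_zero.2 hn0)
  -- upper bounds for the three negative factorial logs
  have neg_bound : ∀ d : ℕ, d = 2 ∨ d = 3 ∨ d = 5 →
      Real.log ((n/d)!) ≤ (n:ℝ)/d * Real.log ((n:ℝ)/d) - (n:ℝ)/d + Real.log n + 2 := by
    intro d hd
    have hd1 : (1:ℝ) ≤ (d:ℝ) := by rcases hd with h|h|h <;> subst h <;> norm_num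
    obtain ⟨ha, hb, hc⟩ := floor_div_facts n d (by rcases hd with h|h|h <;> omega)
      (by rcases hd with h|h|h <;> omega)
    set a : ℝ := ((n/d : ℕ) : ℝ)
    have ha0 : (0:ℝ) < a := by linarith
    have hr1 : (1:ℝ) ≤ (n:ℝ)/d := le_trans ha hb
    have hlb : Real.log a ≤ Real.log ((n:ℝ)/d) := Real.log_le_log ha0 hb
    have hlnd : Real.log ((n:ℝ)/d) ≤ Real.log n := by
      apply Real.log_le_log (by linarith)
      exact div_le_self (le_of_lt hn0') hd1
    have h1 : Real.log ((n/d)!) ≤ a * Real.log a - a + Real.log a + 1 :=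
      log_factorial_le _ ((Nat.one_le_div_iff (by rcases hd with h|h|h <;> omega)).2
        (by rcases hd with h|h|h <;> omega))
    have h2 : a * Real.log a ≤ (n:ℝ)/d * Real.log ((n:ℝ)/d) := by
      calc a * Real.log a ≤ a * Real.log ((n:ℝ)/d) :=
            mul_le_mul_of_nonneg_left hlb (by linarith)
        _ ≤ (n:ℝ)/d * Real.log ((n:ℝ)/d) :=
            mul_le_mul_of_nonneg_right hb (Real.log_nonneg hr1)
    have h3 : Real.log a ≤ Real.log n := hlb.trans hlnd
    linarith
  -- lower bound for the (n/30)! term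
  have pos_bound : (n:ℝ)/30 * Real.log ((n:ℝ)/30) - (n:ℝ)/30 - Real.log n - 1
      ≤ Real.log ((n/30)!) := by
    set a : ℝ := ((n/30 : ℕ) : ℝ)
    have ha0 : (0:ℝ) < a := by linarith
    have hr := log_factorial_ge (n/30)
    -- show (n/30) log(n/30) - a log a ≤ (n/30 - a) + log n + 1 etc.
    have hr1 : (1:ℝ) ≤ (n:ℝ)/30 := le_trans h30a h30b
    have key : (n:ℝ)/30 * Real.log ((n:ℝ)/30) - a * Real.log a ≤ Real.log n + 1 := by
      have e1 : (n:ℝ)/30 * Real.log ((n:ℝ)/30) - a * Real.log a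
          = ((n:ℝ)/30 - a) * Real.log ((n:ℝ)/30) + a * (Real.log ((n:ℝ)/30) - Real.log a) := by
        ring
      have e2 : ((n:ℝ)/30 - a) * Real.log ((n:ℝ)/30) ≤ Real.log n := by
        have hle : Real.log ((n:ℝ)/30) ≤ Real.log n := by
          apply Real.log_le_log (by linarith)
          exact div_le_self (le_of_lt hn0') (by norm_num)
        have hnn : 0 ≤ Real.log ((n:ℝ)/30) := Real.log_nonneg hr1
        nlinarith
      have e3 : a * (Real.log ((n:ℝ)/30) - Real.log a) ≤ 1 := by
        have hdiv : Real.log ((n:ℝ)/30 / a) = Real.log ((n:ℝ)/30) - Real.log a :=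
          Real.log_div (by linarith) (by linarith)
        rw [← hdiv]
        have hld : Real.log ((n:ℝ)/30 / a) ≤ (n:ℝ)/30 / a - 1 :=
          Real.log_le_sub_one_of_pos (by positivity)
        have heq : a * ((n:ℝ)/30 / a - 1) = (n:ℝ)/30 - a := by field_simp
        nlinarith
      linarith
    linarith
  -- main factorial lower bound
  have main_lb : (n:ℝ) * Real.log n - n ≤ Real.log (n !) := log_factorial_ge n
  -- sqrt bound
  have hsqrt : (Nat.sqrt n : ℝ) ≤ Real.sqrt n := by
    rw [show ((n:ℕ):ℝ) = ((n:ℕ):ℝ) from rfl]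
    exact_mod_cast Real.nat_sqrt_le_real_sqrt
  have hsq : (Nat.sqrt n : ℝ) * Real.log n ≤ Real.sqrt n * Real.log n :=
    mul_le_mul_of_nonneg_right hsqrt hlogn0
  -- expand logs of quotients
  have hlog2 : Real.log ((n:ℝ)/2) = Real.log n - Real.log 2 :=
    Real.log_div (by positivity) (by norm_num)
  have hlog3 : Real.log ((n:ℝ)/3) = Real.log n - Real.log 3 :=
    Real.log_div (by positivity) (by norm_num)
  have hlog5 : Real.log ((n:ℝ)/5) = Real.log n - Real.log 5 :=
    Real.log_div (by positivity) (by norm_num)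
  have hlog30 : Real.log ((n:ℝ)/30) = Real.log n - (Real.log 2 + Real.log 3 + Real.log 5) := by
    rw [Real.log_div (by positivity) (by norm_num),
      show (30:ℝ) = 2*3*5 by norm_num, Real.log_mul (by norm_num) (by norm_num),
      Real.log_mul (by norm_num) (by norm_num)]
  have b2 := neg_bound 2 (by norm_num)
  have b3 := neg_bound 3 (by norm_num)
  have b5 := neg_bound 5 (by norm_num)
  push_cast at b2 b3 b5
  rw [hlog2] at b2
  rw [hlog3] at b3
  rw [hlog5] at b5
  rw [hlog30] at pos_bound
  push_cast at b2 b3 b5 pos_bound hlog main_lb hsq ⊢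
  linarith [b2, b3, b5, pos_bound, hlog, main_lb, hsq]

lemma numA : (0.919 : ℝ) ≤ (14 * Real.log 2 + 9 * Real.log 3 + 5 * Real.log 5)/30 := by
  have h3 : 19 * Real.log 2 ≤ 12 * Real.log 3 := by
    have := Real.log_le_log (by positivity : (0:ℝ) < 2^19) (by norm_num : (2:ℝ)^19 ≤ 3^12)
    rwa [Real.log_pow, Real.log_pow] at this
    
  have h5 : 30 * Real.log 2 ≤ 13 * Real.log 5 := by
    have := Real.log_le_log (by positivity : (0:ℝ) < 2^30) (by norm_num : (2:ℝ)^30 ≤ 5^13)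
    rwa [Real.log_pow, Real.log_pow] at this
  have h2 := Real.log_two_gt_d9
  linarith

lemma tail_bound (t : ℝ) (ht : 13000000 ≤ t) :
    (Real.sqrt t + 4) * Real.log t + 7 ≤ 0.07 * t := by
  have ht0 : (0:ℝ) ≤ t := by linarith
  set s : ℝ := t ^ ((1:ℝ)/4) with hs
  have hs0 : 0 ≤ s := Real.rpow_nonneg ht0 _
  have hs4 : s ^ (4:ℕ) = t := by
    rw [hs, ← Real.rpow_natCast (t ^ ((1:ℝ)/4)) 4, ← Real.rpow_mul ht0]
    norm_num
  have hsqrt : Real.sqrt t = s ^ (2:ℕ) := by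
    rw [hs, ← Real.rpow_natCast (t ^ ((1:ℝ)/4)) 2, ← Real.rpow_mul ht0,
      Real.sqrt_eq_rpow]
    norm_num
  have hlog : Real.log t ≤ 4 * s := by
    have := Real.log_le_rpow_div ht0 (by norm_num : (0:ℝ) < 1/4)
    calc Real.log t ≤ t ^ ((1:ℝ)/4) / (1/4) := this
      _ = 4 * s := by rw [hs]; ring
  have hs60 : 60 ≤ s := by
    have h1 : ((60:ℝ) ^ (4:ℕ)) ^ ((1:ℝ)/4) ≤ t ^ ((1:ℝ)/4) :=
      Real.rpow_le_rpow (by positivity) (by norm_num; linarith) (by norm_num)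
    calc (60:ℝ) = ((60:ℝ) ^ (4:ℕ)) ^ ((1:ℝ)/4) := by
          rw [← Real.rpow_natCast (60:ℝ) 4, ← Real.rpow_mul (by norm_num)]
          norm_num
      _ ≤ s := h1
  have hlogs : 0 ≤ Real.log t := Real.log_nonneg (by linarith)
  calc (Real.sqrt t + 4) * Real.log t + 7 ≤ (s^(2:ℕ) + 4) * (4*s) + 7 := by
        rw [hsqrt]
        have : (0:ℝ) ≤ s^(2:ℕ) + 4 := by positivity
        nlinarith
    _ ≤ 0.07 * s^(4:ℕ) := by nlinarith [sq_nonneg s, sq_nonneg (s - 60), hs0, hs60]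
    _ = 0.07 * t := by rw [hs4]

open scoped Classical in
theorem primorial_between_div_e_lower_bound :
    ∃ x₀ : ℕ, ∀ x : ℕ, x ≥ x₀ →
      (∏ p ∈ (Finset.range (x + 1)).filter
          (fun p : ℕ => p.Prime ∧ (x : ℝ) / Real.exp 1 < (p : ℝ)), (p : ℝ))
        ≥ ((x : ℝ) / Real.exp 1) ^ ((x : ℝ) / (3 * Real.log x)) := by
  refine ⟨13000000, fun x hx => ?_⟩
  have hx1 : (13000000:ℝ) ≤ x := by exact_mod_cast hx
  have hx0 : (0:ℝ) < x := by linarith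
  have he : (0:ℝ) < Real.exp 1 := Real.exp_pos 1
  have he3 : Real.exp 1 ≤ 3 := by
    have := Real.exp_one_lt_d9
    linarith
  have hbase : (0:ℝ) < (x:ℝ)/Real.exp 1 := by positivity
  have hlogx : (1:ℝ) ≤ Real.log x := by
    rw [← Real.log_exp 1]
    exact Real.log_le_log (Real.exp_pos 1) (by linarith)
  set m : ℕ := Nat.floor ((x:ℝ)/Real.exp 1) with hm
  have hm_le : (m:ℝ) ≤ (x:ℝ)/Real.exp 1 := Nat.floor_le hbase.le
  have hmx : m ≤ x := by
    have h1 : (x:ℝ)/Real.exp 1 ≤ (x:ℝ) := by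
      rw [div_le_iff₀ he]
      have h1e : (1:ℝ) ≤ Real.exp 1 := by
        have := Real.exp_one_gt_d9
        linarith
      nlinarith
    calc m ≤ Nat.floor ((x:ℝ)) := Nat.floor_mono h1
      _ = x := Nat.floor_natCast x
  -- product splitting
  set S : Finset ℕ := (Finset.range (x+1)).filter Nat.Prime with hS
  have hfilter : (Finset.range (x + 1)).filter
      (fun p : ℕ => p.Prime ∧ (x : ℝ) / Real.exp 1 < (p : ℝ))
      = S.filter (fun p : ℕ => (x:ℝ)/Real.exp 1 < (p:ℝ)) := by
    rw [hS, Finset.filter_filter]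
  have hsplit : (∏ p ∈ S.filter (fun p : ℕ => (x:ℝ)/Real.exp 1 < (p:ℝ)), (p:ℝ))
      * (∏ p ∈ S.filter (fun p : ℕ => ¬ ((x:ℝ)/Real.exp 1 < (p:ℝ))), (p:ℝ))
      = ∏ p ∈ S, (p:ℝ) := Finset.prod_filter_mul_prod_filter_not S _ _
  have hScast : ∏ p ∈ S, (p:ℝ) = ((primorial x : ℕ) : ℝ) := by
    rw [primorial, Nat.cast_prod]
  have hcompl : S.filter (fun p : ℕ => ¬ ((x:ℝ)/Real.exp 1 < (p:ℝ)))
      = (Finset.range (m+1)).filter Nat.Prime := by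
    ext p
    constructor
    · intro hp
      rw [Finset.mem_filter] at hp
      obtain ⟨hp1, hple⟩ := hp
      rw [hS, Finset.mem_filter, Finset.mem_range] at hp1
      obtain ⟨_, hpp⟩ := hp1
      rw [Finset.mem_filter, Finset.mem_range, Nat.lt_succ_iff]
      exact ⟨Nat.le_floor (not_lt.1 hple), hpp⟩
    · intro hp
      rw [Finset.mem_filter, Finset.mem_range, Nat.lt_succ_iff] at hp
      obtain ⟨hpm, hpp⟩ := hp
      rw [Finset.mem_filter, hS, Finset.mem_filter, Finset.mem_range, Nat.lt_succ_iff]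
      refine ⟨⟨le_trans hpm hmx, hpp⟩, not_lt.2 ?_⟩
      calc (p:ℝ) ≤ (m:ℝ) := by exact_mod_cast hpm
        _ ≤ (x:ℝ)/Real.exp 1 := hm_le
  have hcomplcast : (∏ p ∈ S.filter (fun p : ℕ => ¬ ((x:ℝ)/Real.exp 1 < (p:ℝ))), (p:ℝ))
      = ((primorial m : ℕ) : ℝ) := by
    rw [hcompl, primorial, Nat.cast_prod]
  have hpmpos : (0:ℝ) < ((primorial m : ℕ) : ℝ) := by exact_mod_cast primorial_pos m
  have hpxpos : (0:ℝ) < ((primorial x : ℕ) : ℝ) := by exact_mod_cast primorial_pos x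
  have hprod_eq : (∏ p ∈ S.filter (fun p : ℕ => (x:ℝ)/Real.exp 1 < (p:ℝ)), (p:ℝ))
      = ((primorial x : ℕ) : ℝ) / ((primorial m : ℕ) : ℝ) := by
    rw [eq_div_iff hpmpos.ne', ← hcomplcast, hsplit, hScast]
  rw [hfilter, hprod_eq, ge_iff_le]
  -- the key log inequality
  set y : ℝ := (x:ℝ) / (3 * Real.log x) with hy
  have hy0 : 0 ≤ y := by
    rw [hy]
    positivity
  have hlogdiv : Real.log ((x:ℝ)/Real.exp 1) = Real.log x - 1 := by
    rw [Real.log_div hx0.ne' (Real.exp_ne_zero 1), Real.log_exp]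
  have hylog : y * Real.log ((x:ℝ)/Real.exp 1) ≤ (x:ℝ)/3 := by
    rw [hlogdiv]
    have h1 : y * (Real.log x - 1) ≤ y * Real.log x :=
      mul_le_mul_of_nonneg_left (by linarith) hy0
    have h2 : y * Real.log x = (x:ℝ)/3 := by
      rw [hy]
      field_simp
    linarith
  have hpm_ub : Real.log ((primorial m : ℕ) : ℝ) ≤ 0.5101 * x := by
    have h1 : ((primorial m : ℕ) : ℝ) ≤ ((4:ℝ)) ^ m := by
      exact_mod_cast primorial_le_4_pow m
    have h2 : Real.log ((primorial m : ℕ) : ℝ) ≤ m * Real.log 4 := by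
      calc Real.log ((primorial m : ℕ) : ℝ) ≤ Real.log ((4:ℝ)^m) := Real.log_le_log hpmpos h1
        _ = m * Real.log 4 := by rw [Real.log_pow]
    have hlog4 : Real.log 4 = 2 * Real.log 2 := by
      rw [show (4:ℝ) = 2^2 by norm_num, Real.log_pow]
      push_cast
      ring
    have h3 : (m:ℝ) * Real.log 4 ≤ ((x:ℝ)/Real.exp 1) * (2 * Real.log 2) := by
      rw [hlog4]
      exact mul_le_mul_of_nonneg_right hm_le (by linarith [Real.log_pos (by norm_num : (1:ℝ) < 2)])
    have h4 : ((x:ℝ)/Real.exp 1) * (2 * Real.log 2) ≤ 0.5101 * x := by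
      rw [div_mul_eq_mul_div, div_le_iff₀ he]
      have ha : (x:ℝ) * (2 * Real.log 2) ≤ (x:ℝ) * 1.3862943616 := by
        nlinarith [Real.log_two_lt_d9, hx0]
      have hb : (x:ℝ) * 2.7182818283 ≤ (x:ℝ) * Real.exp 1 := by
        nlinarith [Real.exp_one_gt_d9, hx0]
      nlinarith
    linarith
  have hpx_lb : 0.919 * x - ((Real.sqrt x + 4) * Real.log x + 7)
      ≤ Real.log ((primorial x : ℕ) : ℝ) := by
    have h1 := theta_lower x (by omega)
    have h2 : 0.919 * (x:ℝ) ≤ ((14 * Real.log 2 + 9 * Real.log 3 + 5 * Real.log 5)/30) * x :=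
      mul_le_mul_of_nonneg_right numA hx0.le
    linarith
  have htail := tail_bound x hx1
  have hkey : y * Real.log ((x:ℝ)/Real.exp 1)
      ≤ Real.log ((primorial x : ℕ) : ℝ) - Real.log ((primorial m : ℕ) : ℝ) := by
    have : (x:ℝ)/3 ≤ 0.919 * x - 0.07 * x - 0.5101 * x := by linarith
    linarith
  calc ((x:ℝ)/Real.exp 1) ^ y = Real.exp (y * Real.log ((x:ℝ)/Real.exp 1)) := by
        rw [Real.rpow_def_of_pos hbase]
        ring_nf
    _ ≤ Real.exp (Real.log ((primorial x : ℕ) : ℝ) - Real.log ((primorial m : ℕ) : ℝ)) :=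
        Real.exp_le_exp.2 hkey
    _ = ((primorial x : ℕ) : ℝ) / ((primorial m : ℕ) : ℝ) := by
        rw [Real.exp_sub, Real.exp_log hpxpos, Real.exp_log hpmpos]
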